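/- Let ψ : [0,h] → ℝ be real-analytic at 0 (admitting a convergent Taylor expansion), and let P_j be the j-th shifted Legendre polynomial on [0,1], orthonormal with ∫₀¹ P_i P_j = δ_{ij}. Then for each j and each 0 ≤ i ≤ j, the quantity ∫₀¹ P_j(c) c^i ψ(ch) dc is O(h^{j-i}) as h → 0, i.e., there exist constants K, δ > 0 such that |∫₀¹ P_j(c) c^i ψ(ch) dc| ≤ K h^{j-i} for 0 < h < δ. -/

import Mathlib

open Polynomial MeasureTheory intervalIntegral Set

lemma aux_ortho (P : ℕ → Polynomial ℝ)
    (hdeg : ∀ j, (P j).natDegree = j)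
    (horth : ∀ i j, (∫ x in (0:ℝ)..1, (P i).eval x * (P j).eval x)
      = if i = j then 1 else 0) :
    ∀ (n : ℕ) (Q : Polynomial ℝ), Q.natDegree ≤ n → ∀ j : ℕ, Q.degree < (j : WithBot ℕ) →
      ∫ x in (0:ℝ)..1, (P j).eval x * Q.eval x = 0 := by
  have hP0 : ∀ k, P k ≠ 0 := by
    intro k hk
    have := horth k k
    rw [hk] at this
    simp at this
  intro n
  induction n using Nat.strong_induction_on with
  | _ n IH =>
    intro Q hQn j hQj
    rcases eq_or_ne Q 0 with rfl | hQ0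
    · simp
    set d := Q.natDegree with hd
    have hdj : d < j := (Polynomial.natDegree_lt_iff_degree_lt hQ0).mpr hQj
    have hL : (P d).leadingCoeff ≠ 0 := leadingCoeff_ne_zero.mpr (hP0 d)
    set c : ℝ := Q.leadingCoeff / (P d).leadingCoeff with hc
    have hc0 : c ≠ 0 := div_ne_zero (leadingCoeff_ne_zero.mpr hQ0) hL
    set Q' := Q - Polynomial.C c * P d with hQ'
    have hdegPd : (P d).degree = (d : WithBot ℕ) := by
      rw [Polynomial.degree_eq_natDegree (hP0 d), hdeg d]
    have hdegQ : Q.degree = (d : WithBot ℕ) := Polynomial.degree_eq_natDegree hQ0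
    have h1 : Q.degree = (Polynomial.C c * P d).degree := by
      rw [Polynomial.degree_C_mul hc0, hdegPd, hdegQ]
    have h2 : Q.leadingCoeff = (Polynomial.C c * P d).leadingCoeff := by
      rw [Polynomial.leadingCoeff_mul, Polynomial.leadingCoeff_C, hc,
        div_mul_cancel₀ _ hL]
    have hQ'deg : Q'.degree < Q.degree := Polynomial.degree_sub_lt h1 hQ0 h2
    have hsplit : ∀ x : ℝ, (P j).eval x * Q.eval x
        = (P j).eval x * Q'.eval x + c * ((P j).eval x * (P d).eval x) := by
      intro x
      simp only [hQ', Polynomial.eval_sub, Polynomial.eval_mul, Polynomial.eval_C]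
      ring
    have hI1 : IntervalIntegrable (fun x => (P j).eval x * Q'.eval x) volume 0 1 :=
      (((P j).continuous_aeval).mul ((Q').continuous_aeval)).intervalIntegrable 0 1
    have hI2 : IntervalIntegrable (fun x => c * ((P j).eval x * (P d).eval x)) volume 0 1 :=
      (continuous_const.mul (((P j).continuous_aeval).mul ((P d).continuous_aeval))).intervalIntegrable 0 1
    calc ∫ x in (0:ℝ)..1, (P j).eval x * Q.eval x
        = ∫ x in (0:ℝ)..1, ((P j).eval x * Q'.eval x
            + c * ((P j).eval x * (P d).eval x)) := by
          refine intervalIntegral.integral_congr fun x _ => hsplit x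
      _ = (∫ x in (0:ℝ)..1, (P j).eval x * Q'.eval x)
            + ∫ x in (0:ℝ)..1, c * ((P j).eval x * (P d).eval x) :=
          intervalIntegral.integral_add hI1 hI2
      _ = 0 := by
          have hzero2 : (∫ x in (0:ℝ)..1, c * ((P j).eval x * (P d).eval x)) = 0 := by
            rw [intervalIntegral.integral_const_mul, horth j d]
            simp [Nat.ne_of_gt hdj]
          have hzero1 : (∫ x in (0:ℝ)..1, (P j).eval x * Q'.eval x) = 0 := by
            rcases eq_or_ne Q' 0 with hq0 | hq0
            · simp [hq0]
            · have hlt : Q'.natDegree < n :=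
                lt_of_lt_of_le (Polynomial.natDegree_lt_natDegree hq0 hQ'deg) hQn
              exact IH Q'.natDegree hlt Q' le_rfl j (hQ'deg.trans hQj)
          rw [hzero1, hzero2, add_zero]

lemma aux_moment (P : ℕ → Polynomial ℝ)
    (hdeg : ∀ j, (P j).natDegree = j)
    (horth : ∀ i j, (∫ x in (0:ℝ)..1, (P i).eval x * (P j).eval x)
      = if i = j then 1 else 0) (j r : ℕ) (hrj : r < j) :
    ∫ x in (0:ℝ)..1, (P j).eval x * x ^ r = 0 := by
  have := aux_ortho P hdeg horth r (Polynomial.X ^ r) (by simp) j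
    (by rw [Polynomial.degree_X_pow]; exact_mod_cast hrj)
  simpa using this

/-- If `ψ` is real-analytic at `0` and `P j` is the orthonormal (shifted Legendre)
basis on `[0,1]`, then `∫₀¹ P_j(c) c^i ψ(ch) dc = O(h^{j-i})` as `h → 0⁺`, for `i ≤ j`. -/
theorem stmt_3 (P : ℕ → Polynomial ℝ)
    (hdeg : ∀ j, (P j).natDegree = j)
    (horth : ∀ i j, (∫ x in (0:ℝ)..1, (P i).eval x * (P j).eval x)
      = if i = j then 1 else 0)
    (ψ : ℝ → ℝ) (hψ : AnalyticAt ℝ ψ 0)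
    (j i : ℕ) (hij : i ≤ j) :
    ∃ K δ : ℝ, 0 < K ∧ 0 < δ ∧ ∀ h : ℝ, 0 < h → h < δ →
      |∫ c in (0:ℝ)..1, (P j).eval c * c ^ i * ψ (c * h)| ≤ K * h ^ (j - i) := by
  obtain ⟨p, hp⟩ := hψ
  have hrad : 0 < p.radius := hp.radius_pos
  have hsum := hasFPowerSeriesAt_iff.mp hp
  rw [Metric.eventually_nhds_iff] at hsum
  obtain ⟨r0, hr0, hball⟩ := hsum
  obtain ⟨ρ₀, hρ₀, hρ₀rad⟩ := ENNReal.lt_iff_exists_nnreal_btwn.mp hrad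
  set ρ₁ : NNReal := min ρ₀ (Real.toNNReal (r0/2)) with hρ₁def
  have hρ₁rad : (ρ₁ : ENNReal) < p.radius :=
    lt_of_le_of_lt (by exact_mod_cast min_le_left _ _) hρ₀rad
  have hρ₁pos : 0 < ρ₁ := by
    refine lt_min ?_ ?_
    · exact_mod_cast hρ₀
    · exact Real.toNNReal_pos.mpr (by linarith)
  have hρ₁r0 : (ρ₁ : ℝ) < r0 := by
    have h2 : (ρ₁ : ℝ) ≤ r0 / 2 := by
      have := min_le_right ρ₀ (Real.toNNReal (r0/2))
      calc (ρ₁:ℝ) ≤ (Real.toNNReal (r0/2) : ℝ) := by exact_mod_cast this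
        _ = r0/2 := Real.coe_toNNReal _ (by linarith)
    linarith
  obtain ⟨C, hCpos, hC⟩ := p.norm_mul_pow_le_of_lt_radius hρ₁rad
  set a : ℕ → ℝ := fun n => p.coeff n with ha
  have hC' : ∀ n, |a n| * (ρ₁:ℝ)^n ≤ C := by
    intro n
    have := hC n
    rwa [FormalMultilinearSeries.norm_apply_eq_norm_coef, Real.norm_eq_abs] at this
  set ρ : ℝ := (ρ₁ : ℝ) with hρdef
  have hρpos : (0:ℝ) < ρ := hρ₁pos
  have haC : ∀ n, |a n| ≤ C / ρ^n := fun n =>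
    (le_div_iff₀ (pow_pos hρpos n)).mpr (hC' n)
  set N := j - i with hN
  set C0 : ℝ := ∫ x in Set.Ioc (0:ℝ) 1, |(P j).eval x| with hC0
  have hC0nn : 0 ≤ C0 := integral_nonneg fun x => abs_nonneg _
  set K : ℝ := 2 * (C0 * C * 2^N / ρ^N) + 1 with hK
  have hKpos : 0 < K := by
    have : 0 ≤ C0 * C * 2^N / ρ^N := by positivity
    positivity
  refine ⟨K, ρ/2, hKpos, by positivity, ?_⟩
  intro h hh hhδ
  have hhρ : h < ρ := by linarith
  -- the summands
  set F : ℕ → ℝ → ℝ := fun n c => (P j).eval c * c ^ i * (a n * (c*h)^n) with hF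
  have hFsum : ∀ c ∈ Set.Ioc (0:ℝ) 1,
      HasSum (fun n => F n c) ((P j).eval c * c ^ i * ψ (c*h)) := by
    intro c hc
    have hdist : dist (c*h) 0 < r0 := by
      rw [Real.dist_eq, sub_zero, abs_of_nonneg (mul_nonneg hc.1.le hh.le)]
      nlinarith [hc.1, hc.2]
    have := hball hdist
    simp only [zero_add, smul_eq_mul] at this
    have : HasSum (fun n => a n * (c*h)^n) (ψ (c*h)) := by
      simpa [mul_comm] using this
    exact this.mul_left _
  have hFcont : ∀ n, Continuous (F n) := by
    intro n
    exact (((P j).continuous_aeval).mul (continuous_pow i)).mul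
      (continuous_const.mul ((continuous_id.mul continuous_const).pow n))
  have hFint : ∀ n, Integrable (F n) (volume.restrict (Set.Ioc (0:ℝ) 1)) := fun n =>
    ((hFcont n).integrableOn_Ioc)
  have hFnorm : ∀ n, (∫ c in Set.Ioc (0:ℝ) 1, ‖F n c‖) ≤ C0 * (C * (h/ρ)^n) := by
    intro n
    have hmono : ∀ c ∈ Set.Ioc (0:ℝ) 1, ‖F n c‖ ≤ |(P j).eval c| * (C * (h/ρ)^n) := by
      intro c hc
      have hc0 : (0:ℝ) < c := hc.1
      have hc1 : c ≤ 1 := hc.2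
      have h1 : ‖F n c‖ = |(P j).eval c| * (c^i * (|a n| * (c*h)^n)) := by
        rw [hF]
        simp only [Real.norm_eq_abs, abs_mul]
        rw [abs_of_nonneg (by positivity : (0:ℝ) ≤ c^i),
          abs_of_nonneg (by positivity : (0:ℝ) ≤ (c*h)^n)]
        ring
      rw [h1]
      apply mul_le_mul_of_nonneg_left _ (abs_nonneg _)
      have h2 : c^i ≤ 1 := pow_le_one₀ hc0.le hc1
      have h3 : (c*h)^n ≤ h^n := by
        apply pow_le_pow_left₀ (by positivity)
        nlinarith
      have h4 : |a n| * (c*h)^n ≤ (C/ρ^n) * h^n :=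
        mul_le_mul (haC n) h3 (by positivity) (by positivity)
      have h5 : (C/ρ^n) * h^n = C * (h/ρ)^n := by
        rw [div_pow]; ring
      calc c^i * (|a n| * (c*h)^n) ≤ 1 * ((C/ρ^n) * h^n) := by
            apply mul_le_mul h2 h4 (by positivity) one_pos.le
        _ = C * (h/ρ)^n := by rw [one_mul, h5]
    calc (∫ c in Set.Ioc (0:ℝ) 1, ‖F n c‖)
        ≤ ∫ c in Set.Ioc (0:ℝ) 1, |(P j).eval c| * (C * (h/ρ)^n) := by
          refine setIntegral_mono_on (hFint n).norm ?_ measurableSet_Ioc hmono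
          exact (((P j).continuous_aeval.abs).mul continuous_const).integrableOn_Ioc
      _ = C0 * (C * (h/ρ)^n) := by
          rw [MeasureTheory.integral_mul_const]
  have hgeo : Summable fun n => C0 * (C * (h/ρ)^n) := by
    apply Summable.mul_left
    apply Summable.mul_left
    refine summable_geometric_of_lt_one (by positivity) ?_
    rw [div_lt_one hρpos]; linarith
  have hFsummable : Summable fun n => ∫ c in Set.Ioc (0:ℝ) 1, ‖F n c‖ :=
    Summable.of_nonneg_of_le
      (fun n => integral_nonneg fun c => norm_nonneg _) hFnorm hgeo
  -- the key identity
  have hkey : (∫ c in (0:ℝ)..1, (P j).eval c * c ^ i * ψ (c * h))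
      = ∑' n, ∫ c in Set.Ioc (0:ℝ) 1, F n c := by
    rw [intervalIntegral.integral_of_le zero_le_one]
    rw [MeasureTheory.integral_tsum_of_summable_integral_norm hFint hFsummable]
    exact setIntegral_congr_fun measurableSet_Ioc fun c hc => ((hFsum c hc).tsum_eq).symm
  set g : ℕ → ℝ := fun n => ∫ c in Set.Ioc (0:ℝ) 1, F n c with hg
  have hg0 : ∀ n, n < N → g n = 0 := by
    intro n hn
    have hFeq : ∀ c : ℝ, F n c = (a n * h^n) * ((P j).eval c * c^(i+n)) := by
      intro c; rw [hF]; ring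
    have : g n = (a n * h^n) * ∫ c in Set.Ioc (0:ℝ) 1, (P j).eval c * c^(i+n) := by
      rw [hg]
      simp only [hFeq]
      rw [MeasureTheory.integral_const_mul]
    rw [this, ← intervalIntegral.integral_of_le zero_le_one,
      aux_moment P hdeg horth j (i+n) (by omega), mul_zero]
  set b : ℕ → ℝ := fun n => (C0 * C * 2^N / ρ^N * h^N) * (1/2:ℝ)^n with hb
  have hbnn : ∀ n, 0 ≤ b n := by intro n; rw [hb]; positivity
  have hhalf : h/ρ ≤ 1/2 := by rw [div_le_iff₀ hρpos]; linarith
  have hgb : ∀ n, ‖g n‖ ≤ b n := by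
    intro n
    rcases lt_or_ge n N with hn | hn
    · rw [hg0 n hn]; simpa using hbnn n
    · obtain ⟨m, rfl⟩ := Nat.exists_eq_add_of_le hn
      calc ‖g (N+m)‖ ≤ C0 * (C * (h/ρ)^(N+m)) :=
            le_trans (norm_integral_le_integral_norm _) (hFnorm _)
        _ = (C0 * C * (h^N/ρ^N)) * (h/ρ)^m := by rw [pow_add, div_pow]; ring
        _ ≤ (C0 * C * (h^N/ρ^N)) * (1/2:ℝ)^m := by
            apply mul_le_mul_of_nonneg_left _ (by positivity)
            exact pow_le_pow_left₀ (by positivity) hhalf m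
        _ = b (N+m) := by
            rw [hb]
            show _ = C0 * C * 2 ^ N / ρ ^ N * h ^ N * (1 / 2:ℝ) ^ (N + m)
            rw [pow_add]
            field_simp
            rw [mul_assoc, ← mul_pow]; norm_num
  have hbsummable : Summable b := by
    apply Summable.mul_left
    exact summable_geometric_of_lt_one (by norm_num) (by norm_num)
  have hgsummable : Summable fun n => ‖g n‖ :=
    Summable.of_nonneg_of_le (fun n => norm_nonneg _) hgb hbsummable
  have htsumb : ∑' n, b n = (C0 * C * 2^N / ρ^N * h^N) * 2 := by
    rw [hb, tsum_mul_left, tsum_geometric_of_lt_one (by norm_num) (by norm_num)]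
    norm_num
  have hfinal : |∑' n, g n| ≤ (C0 * C * 2^N / ρ^N * h^N) * 2 := by
    rw [← Real.norm_eq_abs, ← htsumb]
    exact le_trans (norm_tsum_le_tsum_norm hgsummable)
      (Summable.tsum_le_tsum hgb hgsummable hbsummable)
  rw [hkey]
  refine le_trans hfinal ?_
  have hq : (0:ℝ) ≤ C0 * C * 2^N / ρ^N := by positivity
  have hpow : (0:ℝ) ≤ h^N := by positivity
  rw [hK]
  nlinarith
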